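/- For independent exponential random variables B_1,...,B_i with rates μ_1,...,μ_i > 0, let B_1^j := B_1 + ... + B_j and let f_{B_1^j} denote the probability density of B_1^j. Then for all x ≥ 0, P{B_1^i > x} = Σ_{j=1}^i (1/μ_j) f_{B_1^j}(x). -/

import Mathlib

open MeasureTheory ProbabilityTheory Set

namespace HypoexpAux

open Real

lemma exp_max_integral {r s a b : ℝ} (hr : 0 < r) (hab : a ≤ b) :
    (∫ t in a..b, (if s ≤ t then r * Real.exp (-r * (t - s)) else 0))
      = Real.exp (-r * max (a - s) 0) - Real.exp (-r * max (b - s) 0) := by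
  have hmeas : Measurable fun t : ℝ => if s ≤ t then r * Real.exp (-r * (t - s)) else 0 := by
    refine Measurable.ite measurableSet_Ici ?_ measurable_const
    fun_prop
  have hint : IntervalIntegrable (fun t => if s ≤ t then r * Real.exp (-r * (t - s)) else 0)
      volume a b := by
    rw [intervalIntegrable_iff]
    haveI : IsFiniteMeasure (volume.restrict (Set.uIoc a b)) :=
      ⟨by simpa [Set.uIoc] using measure_Ioc_lt_top⟩
    refine Integrable.mono' (integrable_const r) hmeas.aestronglyMeasurable.restrict
      (ae_of_all _ fun t => ?_)
    by_cases h : s ≤ t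
    · rw [if_pos h, Real.norm_eq_abs, abs_of_nonneg (by positivity)]
      have h1 : Real.exp (-r * (t - s)) ≤ 1 := by
        rw [Real.exp_le_one_iff]
        nlinarith
      nlinarith
    · simp [h, hr.le]
  have hcont : ContinuousOn (fun t => -Real.exp (-r * max (t - s) 0)) (Icc a b) := by
    apply Continuous.continuousOn
    fun_prop
  have hderiv : ∀ x ∈ Ioo a b, HasDerivWithinAt (fun t => -Real.exp (-r * max (t - s) 0))
      ((fun t => if s ≤ t then r * Real.exp (-r * (t - s)) else 0) x) (Ioi x) x := by
    intro x hx
    by_cases hsx : s ≤ x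
    · simp only [if_pos hsx]
      have h1 : HasDerivAt (fun t : ℝ => -Real.exp (-r * (t - s)))
          (r * Real.exp (-r * (x - s))) x := by
        have h2 := (((hasDerivAt_id x).sub_const s).const_mul (-r)).exp.neg
        simp only [id_eq] at h2
        have h3 : -(Real.exp (-r * (x - s)) * (-r * 1)) = r * Real.exp (-r * (x - s)) := by
          ring
        rw [← h3]
        exact h2
      refine (h1.hasDerivWithinAt).congr (fun y hy => ?_) ?_
      · rw [max_eq_left (by simp only [mem_Ioi] at hy; linarith)]
      · rw [max_eq_left (by linarith)]
    · simp only [if_neg hsx]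
      push_neg at hsx
      refine (hasDerivWithinAt_const x (Ioi x) (-1 : ℝ)).congr_of_eventuallyEq ?_ ?_
      · filter_upwards [mem_nhdsWithin_of_mem_nhds (Iio_mem_nhds hsx)] with y hy
        rw [max_eq_right (by simp only [mem_Iio] at hy; linarith)]
        simp
      · rw [max_eq_right (by linarith)]
        simp
  have := intervalIntegral.integral_eq_sub_of_hasDeriv_right_of_le hab hcont hderiv hint
  rw [this]
  ring

lemma expMeasure_Iic {r : ℝ} (hr : 0 < r) (t : ℝ) :
    expMeasure r (Iic t) = ENNReal.ofReal (1 - Real.exp (-r * max t 0)) := by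
  rw [expMeasure, gammaMeasure, withDensity_apply _ measurableSet_Iic]
  have h1 : ∫⁻ y in Iic t, gammaPDF 1 r y = ∫⁻ y in Iic t, exponentialPDF r y := rfl
  rw [h1, lintegral_exponentialPDF_eq_antiDeriv hr t]
  congr 1
  rcases le_or_gt 0 t with h | h
  · rw [if_pos h, max_eq_left h, neg_mul]
  · rw [if_neg (not_le.mpr h), max_eq_right h.le]
    simp

lemma integrable_of_bounded {ν : Measure ℝ} [IsFiniteMeasure ν] {g : ℝ → ℝ} {c : ℝ}
    (hm : AEStronglyMeasurable g ν) (hb : ∀ s, |g s| ≤ c) : Integrable g ν :=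
  Integrable.mono' (integrable_const c) hm (ae_of_all _ fun s => by simpa using hb s)

lemma step_cdf {ν q : Measure ℝ} [IsProbabilityMeasure ν] {r : ℝ} (hr : 0 < r)
    (hq : q = Measure.map (fun p : ℝ × ℝ => p.1 + p.2) (ν.prod (expMeasure r)))
    {a b : ℝ} (hab : a ≤ b) :
    (q (Iic b)).toReal - (q (Iic a)).toReal
      = ∫ t in a..b, r * ((ν (Iic t)).toReal - (q (Iic t)).toReal) := by
  haveI : IsProbabilityMeasure (expMeasure r) := isProbabilityMeasure_expMeasure hr
  set W : ℝ → ℝ → ℝ := fun t s => 1 - Real.exp (-r * max (t - s) 0) with hW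
  have hWcont : ∀ t, Continuous (W t) := fun t => by fun_prop
  have hexple : ∀ t s : ℝ, Real.exp (-r * max (t - s) 0) ≤ 1 := by
    intro t s
    rw [Real.exp_le_one_iff]
    have := le_max_right (t - s) 0
    nlinarith [le_max_right (t - s) (0:ℝ)]
  have hWnonneg : ∀ t s, 0 ≤ W t s := fun t s => by
    have := hexple t s; simp only [hW]; linarith
  have hWle : ∀ t s, W t s ≤ 1 := fun t s => by
    have := Real.exp_pos (-r * max (t - s) 0); simp only [hW]; linarith
  have hWint : ∀ t, Integrable (W t) ν := fun t =>
    integrable_of_bounded ((hWcont t).aestronglyMeasurable)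
      (fun s => abs_le.mpr ⟨by linarith [hWnonneg t s], hWle t s⟩)
  have hqIic : ∀ t, q (Iic t) = ∫⁻ s, ENNReal.ofReal (W t s) ∂ν := by
    intro t
    rw [hq, Measure.map_apply (by fun_prop : Measurable fun p : ℝ × ℝ => p.1 + p.2) measurableSet_Iic,
      Measure.prod_apply ((by fun_prop : Measurable fun p : ℝ × ℝ => p.1 + p.2) measurableSet_Iic)]
    refine lintegral_congr fun s => ?_
    have h2 : Prod.mk s ⁻¹' ((fun p : ℝ × ℝ => p.1 + p.2) ⁻¹' Iic t) = Iic (t - s) := by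
      ext u
      simp only [mem_preimage, mem_Iic]
      constructor <;> intro h <;> linarith
    rw [h2, expMeasure_Iic hr]
  have hFq : ∀ t, (q (Iic t)).toReal = ∫ s, W t s ∂ν := by
    intro t
    rw [hqIic t, ← ofReal_integral_eq_lintegral_ofReal (hWint t)
      (ae_of_all _ fun s => hWnonneg t s),
      ENNReal.toReal_ofReal (integral_nonneg fun s => hWnonneg t s)]
  set H : ℝ → ℝ → ℝ := fun t s => if s ≤ t then Real.exp (-r * (t - s)) else 0 with hH
  have hHbound : ∀ t s, 0 ≤ H t s ∧ H t s ≤ 1 := by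
    intro t s
    simp only [hH]
    by_cases h : s ≤ t
    · simp only [if_pos h]
      refine ⟨(Real.exp_pos _).le, ?_⟩
      rw [Real.exp_le_one_iff]
      nlinarith
    · simp [h]
  have hIndInt : ∀ t : ℝ, Integrable ((Iic t).indicator (1 : ℝ → ℝ)) ν := fun t =>
    (integrable_const (1:ℝ)).indicator measurableSet_Iic
  have hdiff : ∀ t, (ν (Iic t)).toReal - (q (Iic t)).toReal = ∫ s, H t s ∂ν := by
    intro t
    rw [← measureReal_def ν, ← integral_indicator_one (μ := ν) measurableSet_Iic, hFq t,
      ← integral_sub (hIndInt t) (hWint t)]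
    refine integral_congr_ae (ae_of_all _ fun s => ?_)
    show (Iic t).indicator 1 s - W t s = H t s
    simp only [indicator_apply, mem_Iic, Pi.one_apply, hW, hH]
    by_cases hst : s ≤ t
    · rw [if_pos hst, if_pos hst, max_eq_left (by linarith : (0:ℝ) ≤ t - s)]
      ring
    · rw [if_neg hst, if_neg hst, max_eq_right (by linarith : t - s ≤ (0:ℝ))]
      simp
  have hm : Measurable fun p : ℝ × ℝ => r * H p.1 p.2 := by
    refine measurable_const.mul ?_
    simp only [hH]
    exact Measurable.ite (measurableSet_le measurable_snd measurable_fst) (by fun_prop)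
      measurable_const
  haveI hfin : IsFiniteMeasure (volume.restrict (Ioc a b)) :=
    ⟨by simpa using measure_Ioc_lt_top⟩
  have hUncurry : Integrable (Function.uncurry fun t s => r * H t s)
      ((volume.restrict (Ioc a b)).prod ν) := by
    refine Integrable.mono' (integrable_const r) hm.aestronglyMeasurable
      (ae_of_all _ fun p => ?_)
    obtain ⟨h0, h1⟩ := hHbound p.1 p.2
    rw [Function.uncurry, Real.norm_eq_abs, abs_of_nonneg (by positivity)]
    nlinarith
  have hswap : (∫ t in a..b, r * (∫ s, H t s ∂ν)) = ∫ s, (W b s - W a s) ∂ν := by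
    rw [intervalIntegral.integral_of_le hab]
    calc ∫ t in Ioc a b, r * (∫ s, H t s ∂ν)
        = ∫ t in Ioc a b, ∫ s, r * H t s ∂ν := by
          refine setIntegral_congr_fun measurableSet_Ioc fun t _ => ?_
          rw [integral_const_mul]
      _ = ∫ s, (∫ t in Ioc a b, r * H t s) ∂ν := integral_integral_swap hUncurry
      _ = ∫ s, (W b s - W a s) ∂ν := by
          refine integral_congr_ae (ae_of_all _ fun s => ?_)
          show (∫ t in Ioc a b, r * H t s) = W b s - W a s
          rw [← intervalIntegral.integral_of_le hab]
          have h3 : ∀ t, r * H t s = (if s ≤ t then r * Real.exp (-r * (t - s)) else 0) := by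
            intro t; by_cases h : s ≤ t <;> simp [hH, h]
          rw [intervalIntegral.integral_congr (fun t _ => h3 t), exp_max_integral hr hab]
          simp only [hW]
          ring
  calc (q (Iic b)).toReal - (q (Iic a)).toReal
      = ∫ s, (W b s - W a s) ∂ν := by
        rw [hFq, hFq, ← integral_sub (hWint b) (hWint a)]
    _ = ∫ t in a..b, r * (∫ s, H t s ∂ν) := hswap.symm
    _ = ∫ t in a..b, r * ((ν (Iic t)).toReal - (q (Iic t)).toReal) := by
        refine intervalIntegral.integral_congr fun t _ => ?_
        rw [hdiff t]

lemma eq_on_Ici_of_integral_eq {g h : ℝ → ℝ}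
    (hgc : ContinuousOn g (Ici 0)) (hhc : ContinuousOn h (Ici 0))
    (hgm : AEStronglyMeasurable g volume) (hhm : AEStronglyMeasurable h volume)
    (hgi : ∀ a b : ℝ, IntervalIntegrable g volume a b)
    (hhi : ∀ a b : ℝ, IntervalIntegrable h volume a b)
    (heq : ∀ b, 0 ≤ b → (∫ t in (0:ℝ)..b, g t) = ∫ t in (0:ℝ)..b, h t)
    {x : ℝ} (hx : 0 ≤ x) : g x = h x := by
  have hmg : StronglyMeasurableAtFilter g (nhdsWithin x (Ioi x)) volume :=
    ⟨univ, Filter.univ_mem, by rwa [Measure.restrict_univ]⟩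
  have hmh : StronglyMeasurableAtFilter h (nhdsWithin x (Ioi x)) volume :=
    ⟨univ, Filter.univ_mem, by rwa [Measure.restrict_univ]⟩
  have hG : HasDerivWithinAt (fun u => ∫ t in (0:ℝ)..u, g t) (g x) (Ici x) x :=
    intervalIntegral.integral_hasDerivWithinAt_right (hgi 0 x) hmg
      (((hgc x hx).mono (Ici_subset_Ici.mpr hx)).mono Ioi_subset_Ici_self)
  have hH : HasDerivWithinAt (fun u => ∫ t in (0:ℝ)..u, h t) (h x) (Ici x) x :=
    intervalIntegral.integral_hasDerivWithinAt_right (hhi 0 x) hmh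
      (((hhc x hx).mono (Ici_subset_Ici.mpr hx)).mono Ioi_subset_Ici_self)
  have hGH : HasDerivWithinAt (fun u => ∫ t in (0:ℝ)..u, h t) (g x) (Ici x) x :=
    hG.congr (fun y hy => (heq y (hx.trans hy)).symm) ((heq x hx).symm)
  rw [← hGH.derivWithin (uniqueDiffOn_Ici x x Set.self_mem_Ici),
    hH.derivWithin (uniqueDiffOn_Ici x x Set.self_mem_Ici)]

lemma prob_Iic_toReal_le_one (κ : Measure ℝ) [IsProbabilityMeasure κ] (t : ℝ) :
    (κ (Iic t)).toReal ≤ 1 := by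
  have h1 : κ (Iic t) ≤ 1 := prob_le_one
  calc (κ (Iic t)).toReal ≤ (1 : ENNReal).toReal :=
        ENNReal.toReal_mono ENNReal.one_ne_top h1
    _ = 1 := by simp

lemma density_eq {ν q : Measure ℝ} [IsProbabilityMeasure ν] [IsProbabilityMeasure q]
    {r : ℝ} (hr : 0 < r)
    (hq : q = Measure.map (fun p : ℝ × ℝ => p.1 + p.2) (ν.prod (expMeasure r)))
    {g : ℝ → ℝ} (hgc : ContinuousOn g (Ici 0)) (hgm : AEStronglyMeasurable g volume)
    (hgi : ∀ a b : ℝ, IntervalIntegrable g volume a b)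
    (hνc : ContinuousOn (fun t => (ν (Iic t)).toReal) (Ici 0))
    (hcdf : ∀ a b : ℝ, (q (Iic b)).toReal - (q (Iic a)).toReal = ∫ t in a..b, g t)
    {x : ℝ} (hx : 0 ≤ x) :
    g x = r * ((ν (Iic x)).toReal - (q (Iic x)).toReal) := by
  set h : ℝ → ℝ := fun t => r * ((ν (Iic t)).toReal - (q (Iic t)).toReal) with hh
  have hqc : Continuous fun t => (q (Iic t)).toReal := by
    have h1 : (fun t => (q (Iic t)).toReal)
        = fun t => (q (Iic 0)).toReal + ∫ u in (0:ℝ)..t, g u := by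
      funext t
      rw [← hcdf 0 t]
      ring
    rw [h1]
    exact continuous_const.add (intervalIntegral.continuous_primitive hgi 0)
  have hhc : ContinuousOn h (Ici 0) := continuousOn_const.mul (hνc.sub hqc.continuousOn)
  have hmono : Monotone fun t => (ν (Iic t)).toReal := by
    intro t t' htt'
    exact ENNReal.toReal_mono (measure_ne_top _ _) (measure_mono (Iic_subset_Iic.mpr htt'))
  have hhm : AEStronglyMeasurable h volume :=
    (measurable_const.mul (hmono.measurable.sub hqc.measurable)).aestronglyMeasurable
  have hhb : ∀ t, |h t| ≤ r := by
    intro t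
    have h1 := prob_Iic_toReal_le_one ν t
    have h2 := prob_Iic_toReal_le_one q t
    have h3 : (0:ℝ) ≤ (ν (Iic t)).toReal := ENNReal.toReal_nonneg
    have h4 : (0:ℝ) ≤ (q (Iic t)).toReal := ENNReal.toReal_nonneg
    rw [hh, abs_mul, abs_of_nonneg hr.le]
    have h5 : |(ν (Iic t)).toReal - (q (Iic t)).toReal| ≤ 1 := abs_le.mpr ⟨by linarith, by linarith⟩
    nlinarith
  have hhi : ∀ a b : ℝ, IntervalIntegrable h volume a b := by
    intro a b
    rw [intervalIntegrable_iff]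
    haveI : IsFiniteMeasure (volume.restrict (Set.uIoc a b)) :=
      ⟨by simpa [Set.uIoc] using measure_Ioc_lt_top⟩
    exact integrable_of_bounded hhm.restrict hhb
  have hstep : ∀ b, 0 ≤ b → (∫ t in (0:ℝ)..b, g t) = ∫ t in (0:ℝ)..b, h t := by
    intro b hb
    rw [← hcdf 0 b, step_cdf hr hq hb]
  exact eq_on_Ici_of_integral_eq hgc hhc hgm hhm hgi hhi hstep hx

end HypoexpAux

open HypoexpAux

/-- For independent exponential random variables `B 1, ..., B i` with rates
`μ 1, ..., μ i > 0`, with `B_1^j` the partial sum and `f j` its probability density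
(the continuous hypoexponential density, characterised by the CDF), for all `x ≥ 0`,
`P{B_1^i > x} = ∑_{j=1}^i (1/μ j) f j x`. -/
theorem hypoexp_tail_eq_sum_densities
    {Ω : Type*} [MeasurableSpace Ω] (P : Measure Ω) [IsProbabilityMeasure P]
    (i : ℕ) (hi : 1 ≤ i) (μ : Fin i → ℝ) (hμ : ∀ l, 0 < μ l)
    (B : Fin i → Ω → ℝ) (hmB : ∀ l, Measurable (B l))
    (hindep : iIndepFun B P)
    (hdist : ∀ l, Measure.map (B l) P = expMeasure (μ l))
    (f : Fin i → ℝ → ℝ)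
    (hf_cont : ∀ j, ContinuousOn (f j) (Set.Ici 0))
    (hf_cdf : ∀ (j : Fin i) (a : ℝ),
      (P {ω | (∑ l : Fin i, if l ≤ j then B l ω else 0) ≤ a}).toReal
        = ∫ t in Set.Iic a, f j t)
    (x : ℝ) (hx : 0 ≤ x) :
    (P {ω | x < ∑ l : Fin i, B l ω}).toReal = ∑ j : Fin i, (1 / μ j) * f j x := by
  classical
  set S : Fin i → Ω → ℝ := fun j ω => ∑ l : Fin i, if l ≤ j then B l ω else 0 with hS
  have hSm : ∀ j, Measurable (S j) := by
    intro j
    rw [hS]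
    apply Finset.measurable_sum
    intro l _
    by_cases h : l ≤ j <;> simp [h, hmB l]
  set ν : Fin i → Measure ℝ := fun j => Measure.map (S j) P with hν
  have hprob : ∀ j, IsProbabilityMeasure (ν j) := fun j =>
    Measure.isProbabilityMeasure_map (hSm j).aemeasurable
  have hFint : ∀ (j : Fin i) (a : ℝ), (ν j (Iic a)).toReal = ∫ t in Iic a, f j t := by
    intro j a
    rw [hν]
    show (Measure.map (S j) P (Iic a)).toReal = _
    rw [Measure.map_apply (hSm j) measurableSet_Iic]
    have h1 : S j ⁻¹' (Iic a) = {ω | (∑ l : Fin i, if l ≤ j then B l ω else 0) ≤ a} := by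
      rw [hS]; rfl
    rw [h1]
    exact hf_cdf j a
  -- integrability of the densities on half-lines
  have hIntIic : ∀ (j : Fin i) (a : ℝ), IntegrableOn (f j) (Iic a) := by
    intro j a
    by_contra hcon
    haveI := hprob j
    have hzero : ∀ b : ℝ, a ≤ b → ν j (Iic b) = 0 := by
      intro b hb
      have h1 : ¬ IntegrableOn (f j) (Iic b) := fun hh =>
        hcon (hh.mono_set (Iic_subset_Iic.mpr hb))
      have h2 : (ν j (Iic b)).toReal = 0 := by
        rw [hFint]; exact integral_undef h1
      have h3 := measure_ne_top (ν j) (Iic b)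
      rcases (ENNReal.toReal_eq_zero_iff _).mp h2 with h | h
      · exact h
      · exact absurd h h3
    have hcover : (univ : Set ℝ) ⊆ ⋃ n : ℕ, Iic (a + n) := by
      intro t _
      obtain ⟨n, hn⟩ := exists_nat_ge (t - a)
      exact mem_iUnion.mpr ⟨n, mem_Iic.mpr (by linarith)⟩
    have h4 : ν j univ ≤ ∑' n : ℕ, ν j (Iic (a + n)) :=
      (measure_mono hcover).trans (measure_iUnion_le _)
    have h5 : ∀ n : ℕ, ν j (Iic (a + n)) = 0 := fun n =>
      hzero (a + n) (le_add_of_nonneg_right n.cast_nonneg)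
    rw [measure_univ] at h4
    simp [h5] at h4
  have hII : ∀ (j : Fin i) (a b : ℝ), IntervalIntegrable (f j) volume a b := by
    intro j a b
    rw [intervalIntegrable_iff]
    exact (hIntIic j (max a b)).mono_set (fun u hu => hu.2)
  have hAESM : ∀ j, AEStronglyMeasurable (f j) volume := by
    intro j
    have h1 : ∀ n : ℕ, AEStronglyMeasurable (f j) (volume.restrict (Iic (n:ℝ))) := fun n =>
      (hIntIic j n).aestronglyMeasurable
    have hcover : (⋃ n : ℕ, Iic ((n:ℝ))) = univ := by
      ext t
      simp only [mem_iUnion, mem_Iic, mem_univ, iff_true]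
      exact exists_nat_ge t
    have h2 := aestronglyMeasurable_iUnion_iff.mpr h1
    rwa [hcover, Measure.restrict_univ] at h2
  have hFrep : ∀ (j : Fin i) (a b : ℝ),
      (ν j (Iic b)).toReal - (ν j (Iic a)).toReal = ∫ t in a..b, f j t := by
    intro j a b
    rw [hFint j a, hFint j b]
    exact intervalIntegral.integral_Iic_sub_Iic (hIntIic j a) (hIntIic j b)
  have hFcont : ∀ j, Continuous (fun t => (ν j (Iic t)).toReal) := by
    intro j
    have h1 : (fun t => (ν j (Iic t)).toReal)
        = fun t => (ν j (Iic 0)).toReal + ∫ u in (0:ℝ)..t, f j u := by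
      funext t
      rw [← hFrep j 0 t]
      ring
    rw [h1]
    exact continuous_const.add (intervalIntegral.continuous_primitive (hII j) 0)
  -- main induction
  have main : ∀ (n : ℕ) (hn : n < i), ∀ x : ℝ, 0 ≤ x →
      1 - (ν ⟨n, hn⟩ (Iic x)).toReal
        = ∑ l : Fin i, (if l ≤ (⟨n, hn⟩ : Fin i) then (1 / μ l) * f l x else 0) := by
    intro n
    induction n with
    | zero =>
      intro hn x hx
      set j0 : Fin i := ⟨0, hn⟩ with hj0
      haveI := hprob j0
      have hle0 : ∀ l : Fin i, (l ≤ j0) = (l = j0) := by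
        intro l
        apply propext
        constructor
        · intro h
          have h2 : l.val ≤ 0 := h
          exact Fin.ext (Nat.le_zero.mp h2)
        · intro h; exact h ▸ le_rfl
      have hS0 : S j0 = B j0 := by
        funext ω
        rw [hS]
        simp only [hle0]
        rw [Finset.sum_ite_eq' Finset.univ j0 (fun l => B l ω)]
        simp
      have hν0 : ν j0 = expMeasure (μ j0) := by
        rw [hν]
        show Measure.map (S j0) P = _
        rw [hS0, hdist j0]
      haveI : IsProbabilityMeasure (Measure.dirac (0:ℝ)) := Measure.dirac.isProbabilityMeasure
      haveI : IsProbabilityMeasure (expMeasure (μ j0)) := isProbabilityMeasure_expMeasure (hμ j0)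
      have hq0 : ν j0 = Measure.map (fun p : ℝ × ℝ => p.1 + p.2)
          ((Measure.dirac (0:ℝ)).prod (expMeasure (μ j0))) := by
        rw [Measure.dirac_prod,
          Measure.map_map (by fun_prop : Measurable fun p : ℝ × ℝ => p.1 + p.2) measurable_prodMk_left]
        have h1 : ((fun p : ℝ × ℝ => p.1 + p.2) ∘ Prod.mk (0:ℝ)) = id := by
          funext u
          simp [Function.comp]
        rw [h1, Measure.map_id, hν0]
      have hνc : ContinuousOn (fun t => (Measure.dirac (0:ℝ) (Iic t)).toReal) (Ici 0) := by
        refine ContinuousOn.congr (continuousOn_const (c := (1:ℝ))) fun t ht => ?_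
        rw [Measure.dirac_apply_of_mem (mem_Iic.mpr ht)]
        simp
      have hkey := density_eq (hμ j0) hq0 (hf_cont j0) (hAESM j0) (hII j0) hνc
        (fun a b => hFrep j0 a b) hx
      rw [Measure.dirac_apply_of_mem (mem_Iic.mpr hx)] at hkey
      simp only [ENNReal.toReal_one] at hkey
      have hsum : ∑ l : Fin i, (if l ≤ j0 then (1 / μ l) * f l x else 0)
          = (1 / μ j0) * f j0 x := by
        simp only [hle0]
        rw [Finset.sum_ite_eq' Finset.univ j0 (fun l => (1 / μ l) * f l x)]
        simp
      rw [hsum]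
      have hμ0 := (hμ j0).ne'
      field_simp
      linarith [hkey]
    | succ m ih =>
      intro hn x hx
      have hm : m < i := by omega
      set j : Fin i := ⟨m + 1, hn⟩ with hj
      set k : Fin i := ⟨m, hm⟩ with hk
      haveI := hprob j
      haveI := hprob k
      have hsplit : ∀ v : Fin i → ℝ,
          (∑ l : Fin i, if l ≤ j then v l else 0)
            = (∑ l : Fin i, if l ≤ k then v l else 0) + v j := by
        intro v
        have h1 : ∀ l : Fin i, (if l ≤ j then v l else 0)
            = (if l ≤ k then v l else 0) + (if l = j then v l else 0) := by
          intro l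
          by_cases h2 : l = j
          · subst h2
            rw [if_pos le_rfl, if_pos rfl,
              if_neg (show ¬ j ≤ k from fun hle => absurd (show m + 1 ≤ m from hle) (by omega))]
            ring
          · rw [if_neg h2, add_zero]
            by_cases h3 : l ≤ k
            · rw [if_pos h3, if_pos (show l ≤ j by
                have h4 : l.val ≤ m := h3
                show l.val ≤ m + 1
                omega)]
            · have h5 : ¬ l ≤ j := by
                intro hle
                have h6 : l.val ≤ m + 1 := hle
                have h7 : l.val ≠ m + 1 := fun hh => h2 (Fin.ext hh)
                exact h3 (show l.val ≤ m by omega)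
              rw [if_neg h3, if_neg h5]
        rw [Finset.sum_congr rfl fun l _ => h1 l, Finset.sum_add_distrib,
          Finset.sum_ite_eq' Finset.univ j v]
        simp
      have hsum_succ : ∀ ω, S j ω = S k ω + B j ω := by
        intro ω
        rw [hS]
        exact hsplit (fun l => B l ω)
      have hjk : j ∉ Finset.univ.filter (fun l => l ≤ k) := by
        simp only [Finset.mem_filter, Finset.mem_univ, true_and]
        intro hle
        exact absurd (show m + 1 ≤ m from hle) (by omega)
      have hSk_sum : S k = ∑ l ∈ Finset.univ.filter (fun l => l ≤ k), B l := by
        funext ω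
        rw [hS, Finset.sum_apply]
        exact (Finset.sum_filter _ _).symm
      have hindepkj : IndepFun (S k) (B j) P := by
        rw [hSk_sum]
        exact hindep.indepFun_finsetSum_of_notMem hmB hjk
      have hmap : ν j = Measure.map (fun p : ℝ × ℝ => p.1 + p.2)
          ((ν k).prod (expMeasure (μ j))) := by
        have h1 : Measure.map (fun ω => (S k ω, B j ω)) P
            = (Measure.map (S k) P).prod (Measure.map (B j) P) :=
          (indepFun_iff_map_prod_eq_prod_map_map (hSm k).aemeasurable
            (hmB j).aemeasurable).mp hindepkj
        have h2 : S j = (fun p : ℝ × ℝ => p.1 + p.2) ∘ (fun ω => (S k ω, B j ω)) := by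
          funext ω
          exact hsum_succ ω
        haveI : IsProbabilityMeasure (expMeasure (μ j)) := isProbabilityMeasure_expMeasure (hμ j)
        rw [hν]
        show Measure.map (S j) P = _
        rw [h2, ← Measure.map_map (by fun_prop : Measurable fun p : ℝ × ℝ => p.1 + p.2)
          ((hSm k).prodMk (hmB j)), h1, hdist j]
      have hkey := density_eq (hμ j) hmap (hf_cont j) (hAESM j) (hII j)
        (hFcont k).continuousOn (fun a b => hFrep j a b) hx
      have hih := ih hm x hx
      rw [← hk] at hih
      rw [hsplit (fun l => (1 / μ l) * f l x), ← hih]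
      have hμj := (hμ j).ne'
      have h6 : (1 / μ j) * f j x = (ν k (Iic x)).toReal - (ν j (Iic x)).toReal := by
        rw [hkey]
        field_simp
      rw [h6]
      ring
  -- conclude
  have hlastlt : i - 1 < i := by omega
  set last : Fin i := ⟨i - 1, hlastlt⟩ with hlast
  have hall : ∀ l : Fin i, l ≤ last := by
    intro l
    show l.val ≤ i - 1
    have := l.isLt
    omega
  have hgoalset : {ω | x < ∑ l : Fin i, B l ω} = {ω | S last ω ≤ x}ᶜ := by
    ext ω
    simp only [mem_setOf_eq, mem_compl_iff, not_le, hS]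
    have h1 : (∑ l : Fin i, if l ≤ last then B l ω else 0) = ∑ l : Fin i, B l ω :=
      Finset.sum_congr rfl fun l _ => if_pos (hall l)
    rw [h1]
  have hmeasset : MeasurableSet {ω | S last ω ≤ x} := by
    have : {ω | S last ω ≤ x} = S last ⁻¹' Iic x := rfl
    rw [this]
    exact (hSm last) measurableSet_Iic
  rw [hgoalset, measure_compl hmeasset (measure_ne_top _ _), measure_univ]
  have hPset : P {ω | S last ω ≤ x} = ν last (Iic x) := by
    rw [hν]
    show _ = Measure.map (S last) P (Iic x)
    rw [Measure.map_apply (hSm last) measurableSet_Iic]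
    rfl
  rw [hPset, ENNReal.toReal_sub_of_le prob_le_one ENNReal.one_ne_top, ENNReal.toReal_one]
  have hmain := main (i - 1) hlastlt x hx
  rw [← hlast] at hmain
  rw [hmain]
  exact Finset.sum_congr rfl fun l _ => if_pos (hall l)
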